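/- Suppose a region of area π on the unit sphere has perimeter less than 6.62, and its largest component has area t with 0 ≤ t ≤ π, so that the perimeter is at least √(t(4π−t)) + √((π−t)(4π−π+t)). Then t > 23π/25 or t < 2π/25. -/
import Mathlib

set_option maxHeartbeats 1000000


open Real

/-- If a region of area π on the unit sphere has perimeter `P < 6.62`, its largest
component has area `t ∈ [0, π]`, and `P ≥ √(t(4π-t)) + √((π-t)(4π-π+t))`, then
`t > 23π/25` or `t < 2π/25`. -/
theorem largest_component_dichotomy (t P : ℝ)
    (ht : 0 ≤ t) (ht' : t ≤ π) (hP : P < 6.62)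
    (hiso : Real.sqrt (t * (4 * π - t)) + Real.sqrt ((π - t) * (4 * π - π + t)) ≤ P) :
    t > 23 * π / 25 ∨ t < 2 * π / 25 := by
  by_contra h
  push_neg at h
  obtain ⟨h1, h2⟩ := h
  have hpi : (3.141592 : ℝ) < π := Real.pi_gt_d6
  set x := t * (4 * π - t) with hx
  set y := (π - t) * (4 * π - π + t) with hy
  have hx0 : 0 ≤ x := by nlinarith
  have hy0 : 0 ≤ y := by nlinarith
  -- key endpoint product
  have hprod : 0 ≤ (23 * π / 25 - t) * (t - 2 * π / 25) := by nlinarith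
  have hxy : (0.9426 * π ^ 2) ^ 2 ≤ x * y := by nlinarith [sq_nonneg (t - π / 2), sq_nonneg π, hprod, mul_nonneg hprod hprod, sq_nonneg (π * (23 * π / 25 - t) * (t - 2 * π / 25))]
  have hc0 : (0 : ℝ) ≤ 0.9426 * π ^ 2 := by positivity
  have hsqrt : 0.9426 * π ^ 2 ≤ Real.sqrt (x * y) :=
    Real.le_sqrt' (by positivity) |>.mpr hxy
  have hmul : Real.sqrt x * Real.sqrt y = Real.sqrt (x * y) :=
    (Real.sqrt_mul hx0 y).symm
  have hsum : 3.1472 * π ^ 2 ≤ x + y := by nlinarith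
  have hsqx : Real.sqrt x ^ 2 = x := Real.sq_sqrt hx0
  have hsqy : Real.sqrt y ^ 2 = y := Real.sq_sqrt hy0
  have hS : (Real.sqrt x + Real.sqrt y) ^ 2 ≥ 5.0324 * π ^ 2 := by
    have : (Real.sqrt x + Real.sqrt y) ^ 2
        = x + y + 2 * (Real.sqrt x * Real.sqrt y) := by
      rw [add_sq, hsqx, hsqy]; ring
    rw [this, hmul]
    nlinarith
  have hSnn : 0 ≤ Real.sqrt x + Real.sqrt y := by positivity
  have : (6.62 : ℝ) ≤ Real.sqrt x + Real.sqrt y := by nlinarith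
  linarith
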